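/- Let n ≥ 2 and 1 ≤ k < n, and let Φ be the conditional sequential-counter AtMostK encoding of y → (x_1 + ⋯ + x_n ≤ k), consisting of: (¬x_1 ∨ s_{1,1}); for 1 < j ≤ k the clause (¬y ∨ ¬s_{1,j}); for 1 < i < n the clauses (¬x_i ∨ s_{i,1}) and (¬s_{i−1,1} ∨ s_{i,1}); for 1 < i < n and 1 < j ≤ k the clauses (¬x_i ∨ ¬s_{i−1,j−1} ∨ s_{i,j}) and (¬s_{i−1,j} ∨ s_{i,j}); and for 1 < i ≤ n the clause (¬y ∨ ¬x_i ∨ ¬s_{i−1,k}). Then a complete assignment ν of truth values to y, x_1, …, x_n extends to an assignment of the variables s_{i,j} satisfying every clause of Φ if and only if ν(y) = true implies that at most k of ν(x_1), …, ν(x_n) are true. -/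

import Mathlib

abbrev Lit (V : Type) := V × Bool
abbrev Clause (V : Type) := Finset (Lit V)
abbrev CnfForm (V : Type) := Finset (Clause V)

variable {V : Type} [DecidableEq V]

/-- Restriction Φ|_ρ : remove clauses containing a literal of ρ, and delete from the
remaining clauses every literal whose complement is in ρ. -/
def restrict (Φ : CnfForm V) (ρ : Finset (Lit V)) : CnfForm V :=
  (Φ.filter fun c => ∀ l ∈ ρ, l ∉ c).image fun c => c.filter fun l => (l.1, !l.2) ∉ ρ

/-- Unit propagation derives the literal `l` from `Φ` : repeatedly assigning the
literals of unit clauses true and simplifying eventually produces the unit clause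
`{l}` or the empty clause. -/
inductive UPDerives : CnfForm V → Lit V → Prop
  | unit {Φ : CnfForm V} {l : Lit V} : ({l} : Clause V) ∈ Φ → UPDerives Φ l
  | bot {Φ : CnfForm V} {l : Lit V} : (∅ : Clause V) ∈ Φ → UPDerives Φ l
  | step {Φ : CnfForm V} {l : Lit V} (m : Lit V) : ({m} : Clause V) ∈ Φ →
      UPDerives (restrict Φ {m}) l → UPDerives Φ l

/-- Unit propagation derives the empty clause from `Φ`, i.e. `Φ* = ⊥`. -/
inductive UPEmpty : CnfForm V → Prop
  | bot {Φ : CnfForm V} : (∅ : Clause V) ∈ Φ → UPEmpty Φ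
  | step {Φ : CnfForm V} (m : Lit V) : ({m} : Clause V) ∈ Φ → UPEmpty (restrict Φ {m}) → UPEmpty Φ

/-- `UPReach Φ Ψ` : the formula `Ψ` is obtained from `Φ` by a sequence of
unit-propagation steps. -/
inductive UPReach : CnfForm V → CnfForm V → Prop
  | refl (Φ : CnfForm V) : UPReach Φ Φ
  | step {Φ Ψ : CnfForm V} (m : Lit V) : UPReach Φ Ψ → ({m} : Clause V) ∈ Ψ →
      UPReach Φ (restrict Ψ {m})

/-- The set of variables occurring in `Φ`. -/
def varsOf (Φ : CnfForm V) : Finset V := Φ.biUnion fun c => c.image Prod.fst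

/-- A Horn formula: every clause contains at most one positive literal. -/
def IsHorn (Φ : CnfForm V) : Prop := ∀ c ∈ Φ, (c.filter fun l => l.2 = true).card ≤ 1

/-- `Φ⁻` : the negative clauses of `Φ` (no positive literal). -/
def negClauses (Φ : CnfForm V) : CnfForm V := Φ.filter fun c => ∀ l ∈ c, l.2 = false

/-- `Φ⁺` : the clauses of `Φ` with exactly one positive literal. -/
def posPart (Φ : CnfForm V) : CnfForm V :=
  Φ.filter fun c => (c.filter fun l => l.2 = true).card = 1

/-- The conditional sequential-counter AtMostK encoding of `y → (x_1 + ⋯ + x_n ≤ k)`: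
`(¬x_1 ∨ s_{1,1})`; for `1 < j ≤ k` the clause `(¬y ∨ ¬s_{1,j})`; for `1 < i < n` the
clauses `(¬x_i ∨ s_{i,1})` and `(¬s_{i-1,1} ∨ s_{i,1})`; for `1 < i < n`, `1 < j ≤ k`
the clauses `(¬x_i ∨ ¬s_{i-1,j-1} ∨ s_{i,j})` and `(¬s_{i-1,j} ∨ s_{i,j})`; and for
`1 < i ≤ n` the clause `(¬y ∨ ¬x_i ∨ ¬s_{i-1,k})`. -/
def seqAMKCond (n k : ℕ) (x : ℕ → V) (s : ℕ → ℕ → V) (y : V) : CnfForm V :=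
  insert ({(x 1, false), (s 1 1, true)} : Clause V)
    (((Finset.Ioc 1 k).image fun j => ({(y, false), (s 1 j, false)} : Clause V))
      ∪ ((Finset.Ioo 1 n).biUnion fun i =>
          ({({(x i, false), (s i 1, true)} : Clause V),
            ({(s (i - 1) 1, false), (s i 1, true)} : Clause V)} : CnfForm V))
      ∪ ((Finset.Ioo 1 n ×ˢ Finset.Ioc 1 k).biUnion fun q =>
          ({({(x q.1, false), (s (q.1 - 1) (q.2 - 1), false), (s q.1 q.2, true)} : Clause V),
            ({(s (q.1 - 1) q.2, false), (s q.1 q.2, true)} : Clause V)} : CnfForm V))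
      ∪ ((Finset.Ioc 1 n).image fun i =>
          ({(y, false), (x i, false), (s (i - 1) k, false)} : Clause V)))

/-- A complete assignment `ν` of the variables `y, x_1, …, x_n`
extends to an assignment of the variables `s_{i,j}` satisfying every clause of the
conditional sequential-counter AtMostK encoding iff `ν y = true` implies that at most
`k` of the `ν (x i)` are true. -/
theorem stmt15 {V : Type} [DecidableEq V] (n k : ℕ) (hn : 2 ≤ n) (hk : 1 ≤ k) (hkn : k < n)
    (x : ℕ → V) (s : ℕ → ℕ → V) (y : V)
    (hx : ∀ i ∈ Finset.Icc 1 n, ∀ j ∈ Finset.Icc 1 n, x i = x j → i = j)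
    (hsinj : ∀ i ∈ Finset.Icc 1 (n - 1), ∀ j ∈ Finset.Icc 1 k,
      ∀ i' ∈ Finset.Icc 1 (n - 1), ∀ j' ∈ Finset.Icc 1 k,
        s i j = s i' j' → i = i' ∧ j = j')
    (hxs : ∀ l ∈ Finset.Icc 1 n, ∀ i ∈ Finset.Icc 1 (n - 1), ∀ j ∈ Finset.Icc 1 k,
      x l ≠ s i j)
    (hxy : ∀ i ∈ Finset.Icc 1 n, x i ≠ y)
    (hsy : ∀ i ∈ Finset.Icc 1 (n - 1), ∀ j ∈ Finset.Icc 1 k, s i j ≠ y)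
    (ν : V → Bool) :
    (∃ μ : V → Bool, μ y = ν y ∧ (∀ i ∈ Finset.Icc 1 n, μ (x i) = ν (x i)) ∧
        ∀ c ∈ seqAMKCond n k x s y, ∃ l ∈ c, μ l.1 = l.2) ↔
      (ν y = true → ((Finset.Icc 1 n).filter fun i => ν (x i) = true).card ≤ k) := by
  classical
  have hgoal : ((Finset.Icc 1 n).filter fun i => ν (x i) = true).card =
      ((Finset.Icc 1 n).filter fun l => ν (x l) = true).card := rfl
  set cnt : ℕ → ℕ := fun m => ((Finset.Icc 1 m).filter fun l => ν (x l) = true).card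
    with hcntdef
  have hgoal2 : ((Finset.Icc 1 n).filter fun i => ν (x i) = true).card = cnt n := rfl
  have hmono : ∀ a b : ℕ, a ≤ b → cnt a ≤ cnt b := by
    intro a b h
    exact Finset.card_le_card (Finset.filter_subset_filter _ (Finset.Icc_subset_Icc_right h))
  have hub : ∀ m, cnt m ≤ m := by
    intro m
    calc cnt m ≤ (Finset.Icc 1 m).card := Finset.card_filter_le _ _
    _ = m := by simp
  have hsucc : ∀ m : ℕ, cnt (m+1) = if ν (x (m+1)) = true then cnt m + 1 else cnt m := by
    intro m
    have hins : Finset.Icc 1 (m+1) = insert (m+1) (Finset.Icc 1 m) := by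
      ext a; simp [Finset.mem_Icc]; omega
    have hnm : (m+1) ∉ (Finset.Icc 1 m).filter fun l => ν (x l) = true := by
      simp [Finset.mem_Icc]
    simp only [hcntdef, hins, Finset.filter_insert]
    split
    · rw [Finset.card_insert_of_notMem hnm]
    · rfl
  -- membership lemmas
  have mem1 : ({(x 1, false), (s 1 1, true)} : Clause V) ∈ seqAMKCond n k x s y :=
    Finset.mem_insert_self _ _
  have mem2 : ∀ j, 1 < j → j ≤ k →
      ({(y, false), (s 1 j, false)} : Clause V) ∈ seqAMKCond n k x s y := by
    intro j h1 h2
    refine Finset.mem_insert_of_mem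
      (Finset.mem_union_left _ (Finset.mem_union_left _ (Finset.mem_union_left _ ?_)))
    exact Finset.mem_image_of_mem _ (by simp [Finset.mem_Ioc]; omega)
  have mem3 : ∀ i, 1 < i → i < n →
      ({(x i, false), (s i 1, true)} : Clause V) ∈ seqAMKCond n k x s y := by
    intro i h1 h2
    refine Finset.mem_insert_of_mem
      (Finset.mem_union_left _ (Finset.mem_union_left _ (Finset.mem_union_right _ ?_)))
    exact Finset.mem_biUnion.mpr ⟨i, by simp [Finset.mem_Ioo]; omega, by simp⟩
  have mem4 : ∀ i, 1 ≤ i → i + 1 < n →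
      ({(s i 1, false), (s (i+1) 1, true)} : Clause V) ∈ seqAMKCond n k x s y := by
    intro i h1 h2
    refine Finset.mem_insert_of_mem
      (Finset.mem_union_left _ (Finset.mem_union_left _ (Finset.mem_union_right _ ?_)))
    exact Finset.mem_biUnion.mpr ⟨i + 1, by simp [Finset.mem_Ioo]; omega, by simp⟩
  have mem5 : ∀ i j, 1 ≤ i → i + 1 < n → 1 ≤ j → j + 1 ≤ k →
      ({(x (i+1), false), (s i j, false), (s (i+1) (j+1), true)} : Clause V)
        ∈ seqAMKCond n k x s y := by
    intro i j h1 h2 h3 h4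
    refine Finset.mem_insert_of_mem
      (Finset.mem_union_left _ (Finset.mem_union_right _ ?_))
    exact Finset.mem_biUnion.mpr
      ⟨(i + 1, j + 1), by simp [Finset.mem_product, Finset.mem_Ioo, Finset.mem_Ioc]; omega,
        by simp⟩
  have mem6 : ∀ i j, 1 ≤ i → i + 1 < n → 1 < j → j ≤ k →
      ({(s i j, false), (s (i+1) j, true)} : Clause V) ∈ seqAMKCond n k x s y := by
    intro i j h1 h2 h3 h4
    refine Finset.mem_insert_of_mem
      (Finset.mem_union_left _ (Finset.mem_union_right _ ?_))
    exact Finset.mem_biUnion.mpr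
      ⟨(i + 1, j), by simp [Finset.mem_product, Finset.mem_Ioo, Finset.mem_Ioc]; omega,
        by simp⟩
  have mem7 : ∀ i, 1 ≤ i → i + 1 ≤ n →
      ({(y, false), (x (i+1), false), (s i k, false)} : Clause V) ∈ seqAMKCond n k x s y := by
    intro i h1 h2
    refine Finset.mem_insert_of_mem (Finset.mem_union_right _ ?_)
    exact Finset.mem_image_of_mem _ (by simp [Finset.mem_Ioc]; omega)
  rw [hgoal2]
  constructor
  · rintro ⟨μ, hy, hxa, hsat⟩ hνy
    by_contra hbad
    push_neg at hbad
    have inv : ∀ i, ∀ j, 1 ≤ i → i ≤ n - 1 → 1 ≤ j → j ≤ k → j ≤ cnt i → μ (s i j) = true := by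
      intro i
      induction i with
      | zero => intro j h1; omega
      | succ i ih =>
        intro j h1 h2 hj1 hj2 hji
        rcases Nat.eq_zero_or_pos i with hi0 | hi1
        · subst hi0
          have hc1 : cnt 1 ≤ 1 := hub 1
          have hji' : j ≤ cnt 1 := hji
          have hj : j = 1 := by omega
          subst hj
          have hx1 : ν (x 1) = true := by
            by_contra hf
            have h01 := hsucc 0
            simp only [Nat.zero_add] at h01
            rw [if_neg hf] at h01
            have h00 : cnt 0 = 0 := by simp [hcntdef]
            omega
          have hs := hsat _ mem1
          simp only [Finset.mem_insert, Finset.mem_singleton, exists_eq_or_imp,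
            exists_eq_left] at hs
          rcases hs with hs | hs
          · rw [hxa 1 (by simp [Finset.mem_Icc]; omega), hx1] at hs; simp at hs
          · exact hs
        · have hin : i + 1 < n := by omega
          by_cases hcl : j ≤ cnt i
          · have hsij : μ (s i j) = true := ih j hi1 (by omega) hj1 hj2 hcl
            rcases Nat.eq_or_lt_of_le hj1 with hj1' | hj1'
            · subst hj1'
              have hs := hsat _ (mem4 i hi1 hin)
              simp only [Finset.mem_insert, Finset.mem_singleton, exists_eq_or_imp,
                exists_eq_left] at hs
              rcases hs with hs | hs
              · rw [hsij] at hs; simp at hs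
              · exact hs
            · have hs := hsat _ (mem6 i j hi1 hin hj1' hj2)
              simp only [Finset.mem_insert, Finset.mem_singleton, exists_eq_or_imp,
                exists_eq_left] at hs
              rcases hs with hs | hs
              · rw [hsij] at hs; simp at hs
              · exact hs
          · -- cnt i < j ≤ cnt (i+1), so ν (x (i+1)) = true and j = cnt i + 1
            have hxi : ν (x (i+1)) = true := by
              by_contra hf
              have h01 := hsucc i
              rw [if_neg hf] at h01
              omega
            have hμxi : μ (x (i+1)) = true := by
              rw [hxa (i+1) (by simp [Finset.mem_Icc]; omega)]; exact hxi
            have hcc : cnt (i+1) = cnt i + 1 := by rw [hsucc i, if_pos hxi]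
            rcases Nat.eq_or_lt_of_le hj1 with hj1' | hj1'
            · subst hj1'
              have hs := hsat _ (mem3 (i+1) (by omega) hin)
              simp only [Finset.mem_insert, Finset.mem_singleton, exists_eq_or_imp,
                exists_eq_left] at hs
              rcases hs with hs | hs
              · rw [hμxi] at hs; simp at hs
              · exact hs
            · obtain ⟨jj, rfl⟩ : ∃ jj, j = jj + 1 := ⟨j - 1, by omega⟩
              have hsjj : μ (s i jj) = true :=
                ih jj hi1 (by omega) (by omega) (by omega) (by omega)
              have hs := hsat _ (mem5 i jj hi1 hin (by omega) (by omega))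
              simp only [Finset.mem_insert, Finset.mem_singleton, exists_eq_or_imp,
                exists_eq_left] at hs
              rcases hs with hs | hs | hs
              · rw [hμxi] at hs; simp at hs
              · rw [hsjj] at hs; simp at hs
              · exact hs
    -- extract contradiction
    have hex : ∃ m, k + 1 ≤ cnt m := ⟨n, by omega⟩
    set i0 := Nat.find hex with hi0def
    have hspec : k + 1 ≤ cnt i0 := Nat.find_spec hex
    have hle : i0 ≤ n := Nat.find_min' hex (by omega)
    have hge : 2 ≤ i0 := by
      have := hub i0
      omega
    clear_value i0
    obtain ⟨m, rfl⟩ : ∃ m, i0 = m + 1 := ⟨i0 - 1, by omega⟩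
    have hm1 : 1 ≤ m := by omega
    have hmin : cnt m ≤ k := by
      have := Nat.find_min hex (m := m) (by omega)
      omega
    have hxm : ν (x (m+1)) = true := by
      by_contra hf
      have h01 := hsucc m
      rw [if_neg hf] at h01
      omega
    have hcm : k ≤ cnt m := by
      have h01 := hsucc m
      rw [if_pos hxm] at h01
      omega
    have hsmk : μ (s m k) = true := inv m k hm1 (by omega) hk le_rfl hcm
    have hs := hsat _ (mem7 m hm1 hle)
    simp only [Finset.mem_insert, Finset.mem_singleton, exists_eq_or_imp,
      exists_eq_left] at hs
    rcases hs with hs | hs | hs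
    · rw [hy, hνy] at hs; simp at hs
    · rw [hxa (m+1) (by simp [Finset.mem_Icc]; omega), hxm] at hs; simp at hs
    · rw [hsmk] at hs; simp at hs
  · intro hν
    set μ : V → Bool := fun v =>
      if (∃ i ∈ Finset.Icc 1 (n-1), ∃ j ∈ Finset.Icc 1 k, v = s i j ∧ j ≤ cnt i)
      then true
      else if (∃ i ∈ Finset.Icc 1 (n-1), ∃ j ∈ Finset.Icc 1 k, v = s i j)
      then false
      else ν v with hμdef
    have hμy : μ y = ν y := by
      rw [hμdef]
      simp only
      split
      · next hP =>
        obtain ⟨i, hi, j, hj, heq, -⟩ := hP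
        exact absurd heq.symm (hsy i hi j hj)
      · split
        · next hP =>
          obtain ⟨i, hi, j, hj, heq⟩ := hP
          exact absurd heq.symm (hsy i hi j hj)
        · rfl
    have hμx : ∀ i, 1 ≤ i → i ≤ n → μ (x i) = ν (x i) := by
      intro i h1 h2
      rw [hμdef]
      simp only
      split
      · next hP =>
        obtain ⟨i', hi', j', hj', heq, -⟩ := hP
        exact absurd heq (hxs i (by simp [Finset.mem_Icc]; omega) i' hi' j' hj')
      · split
        · next hP =>
          obtain ⟨i', hi', j', hj', heq⟩ := hP
          exact absurd heq (hxs i (by simp [Finset.mem_Icc]; omega) i' hi' j' hj')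
        · rfl
    have hμs : ∀ i j, 1 ≤ i → i ≤ n - 1 → 1 ≤ j → j ≤ k →
        (μ (s i j) = true ↔ j ≤ cnt i) := by
      intro i j h1 h2 h3 h4
      have hi : i ∈ Finset.Icc 1 (n-1) := by simp [Finset.mem_Icc]; omega
      have hj : j ∈ Finset.Icc 1 k := by simp [Finset.mem_Icc]; omega
      rw [hμdef]
      simp only
      split
      · next hP =>
        obtain ⟨i', hi', j', hj', heq, hle'⟩ := hP
        obtain ⟨rfl, rfl⟩ := hsinj i hi j hj i' hi' j' hj' heq
        simp [hle']
      · next hP1 =>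
        split
        · simp only [Bool.false_eq_true, false_iff]
          intro hle
          exact hP1 ⟨i, hi, j, hj, rfl, hle⟩
        · next hP2 => exact absurd ⟨i, hi, j, hj, rfl⟩ hP2
    have hμsF : ∀ i j, 1 ≤ i → i ≤ n - 1 → 1 ≤ j → j ≤ k →
        (μ (s i j) = false ↔ ¬ (j ≤ cnt i)) := by
      intro i j h1 h2 h3 h4
      have := hμs i j h1 h2 h3 h4
      cases hb : μ (s i j) <;> simp [hb] at this ⊢ <;> omega
    refine ⟨μ, hμy, fun i hi => hμx i (by simp [Finset.mem_Icc] at hi; omega)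
      (by simp [Finset.mem_Icc] at hi; omega), ?_⟩
    intro c hc
    have hcntpos : ∀ i, 1 ≤ i → i ≤ n → ν (x i) = true → cnt (i-1) + 1 ≤ cnt i := by
      intro i h1 h2 hxi
      obtain ⟨m, rfl⟩ : ∃ m, i = m + 1 := ⟨i - 1, by omega⟩
      have h01 := hsucc m
      rw [if_pos hxi] at h01
      simp only [Nat.add_sub_cancel]
      omega
    simp only [seqAMKCond, Finset.mem_insert, Finset.mem_union, Finset.mem_image,
      Finset.mem_biUnion, Finset.mem_product, Finset.mem_Ioo, Finset.mem_Ioc,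
      Finset.mem_singleton] at hc
    rcases hc with rfl | ((⟨j, ⟨hj1, hj2⟩, rfl⟩ | ⟨i, ⟨hi1, hi2⟩, rfl | rfl⟩) |
        ⟨⟨i, j⟩, ⟨⟨hi1, hi2⟩, hj1, hj2⟩, rfl | rfl⟩) | ⟨i, ⟨hi1, hi2⟩, rfl⟩
    · -- {(x 1, false), (s 1 1, true)}
      by_cases hx1 : ν (x 1) = true
      · refine ⟨(s 1 1, true), by simp, ?_⟩
        rw [hμs 1 1 le_rfl (by omega) le_rfl hk]
        have := hcntpos 1 le_rfl (by omega) hx1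
        have h00 : cnt 0 = 0 := by simp [hcntdef]
        simp at this; omega
      · exact ⟨(x 1, false), by simp, by
          rw [hμx 1 le_rfl (by omega)]; simpa using hx1⟩
    · -- {(y, false), (s 1 j, false)}, 1 < j ≤ k
      refine ⟨(s 1 j, false), by simp, ?_⟩
      rw [hμsF 1 j le_rfl (by omega) (by omega) hj2]
      have := hub 1
      omega
    · -- {(x i, false), (s i 1, true)}, 1 < i < n
      by_cases hxi : ν (x i) = true
      · refine ⟨(s i 1, true), by simp, ?_⟩
        rw [hμs i 1 (by omega) (by omega) le_rfl hk]
        have := hcntpos i (by omega) (by omega) hxi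
        omega
      · exact ⟨(x i, false), by simp, by
          rw [hμx i (by omega) (by omega)]; simpa using hxi⟩
    · -- {(s (i-1) 1, false), (s i 1, true)}, 1 < i < n
      by_cases hcl : 1 ≤ cnt (i-1)
      · refine ⟨(s i 1, true), by simp, ?_⟩
        rw [hμs i 1 (by omega) (by omega) le_rfl hk]
        have := hmono (i-1) i (by omega)
        omega
      · refine ⟨(s (i-1) 1, false), by simp, ?_⟩
        rw [hμsF (i-1) 1 (by omega) (by omega) le_rfl hk]
        omega
    · -- {(x i, false), (s (i-1) (j-1), false), (s i j, true)}, 1 < i < n, 1 < j ≤ k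
      by_cases hxi : ν (x i) = true
      · by_cases hcl : j - 1 ≤ cnt (i-1)
        · refine ⟨(s i j, true), by simp, ?_⟩
          rw [hμs i j (by omega) (by omega) (by omega) hj2]
          have := hcntpos i (by omega) (by omega) hxi
          omega
        · refine ⟨(s (i-1) (j-1), false), by simp, ?_⟩
          rw [hμsF (i-1) (j-1) (by omega) (by omega) (by omega) (by omega)]
          omega
      · exact ⟨(x i, false), by simp, by
          rw [hμx i (by omega) (by omega)]; simpa using hxi⟩
    · -- {(s (i-1) j, false), (s i j, true)}
      by_cases hcl : j ≤ cnt (i-1)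
      · refine ⟨(s i j, true), by simp, ?_⟩
        rw [hμs i j (by omega) (by omega) (by omega) hj2]
        have := hmono (i-1) i (by omega)
        omega
      · refine ⟨(s (i-1) j, false), by simp, ?_⟩
        rw [hμsF (i-1) j (by omega) (by omega) (by omega) hj2]
        omega
    · -- {(y, false), (x i, false), (s (i-1) k, false)}, 1 < i ≤ n
      by_cases hyv : ν y = true
      · by_cases hxi : ν (x i) = true
        · refine ⟨(s (i-1) k, false), by simp, ?_⟩
          rw [hμsF (i-1) k (by omega) (by omega) hk le_rfl]
          have h1 := hcntpos i (by omega) hi2 hxi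
          have h2 := hmono i n hi2
          have h3 := hν hyv
          omega
        · exact ⟨(x i, false), by simp, by
            rw [hμx i (by omega) (by omega)]; simpa using hxi⟩
      · exact ⟨(y, false), by simp, by rw [hμy]; simpa using hyv⟩
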